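/- Let q be a prime power, d ≥ 1, let L be the lattice of all F_q-linear subspaces of F_q^{d+1} with atom set At (the one-dimensional subspaces), let F(L) = (F_a)_{a∈At} with F_a = {x ∈ L : a ≤ x}, and let α be the unique IE-vector for F(L) supported on V(F(L)). Then ‖α‖₁ = Σ_{k=0}^{d} q^{k(k+1)/2} · N_k, where N_k is the number of F_q-linear subspaces of F_q^{d+1} of dimension k+1; in particular ‖α‖₁ ≥ q^{d(d+1)/2}. -/

import Mathlib

open Finset
open scoped Classical

variable {ι S : Type*}

def region (F : ι → Set S) (τ : Finset ι) : Set S :=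
  (⋂ i ∈ τ, F i) \ ⋃ i ∉ τ, F i

def venn (F : ι → Set S) : Set (Finset ι) :=
  {τ | τ.Nonempty ∧ (region F τ).Nonempty}

def nerve (F : ι → Set S) : Set (Finset ι) :=
  {σ | σ.Nonempty ∧ (⋂ i ∈ σ, F i).Nonempty}

def IsIEVector (F : ι → Set S) (x : Finset ι → ℝ) : Prop :=
  (∀ σ, σ ∉ nerve F → x σ = 0) ∧
  ∀ τ ∈ venn F, (∑ σ ∈ τ.powerset.filter (· ∈ nerve F), x σ) = 1


open Module

set_option linter.unusedSectionVars false

section Aux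
variable {K V : Type*} [Field K] [Fintype K] [AddCommGroup V] [Module K V] [Fintype V]

noncomputable instance subFintype : Fintype (Submodule K V) :=
  have : Finite (Submodule K V) := Finite.of_injective _ SetLike.coe_injective
  Fintype.ofFinite _

lemma exists_sub_finrank (n : ℕ) (W : Submodule K V) (h : n ≤ finrank K W) :
    ∃ H : Submodule K V, H ≤ W ∧ finrank K H = n := by
  obtain ⟨s, hcard, hli⟩ := exists_finset_linearIndependent_of_le_finrank (R := K) (M := ↥W) h
  refine ⟨(Submodule.span K (s : Set ↥W)).map W.subtype, Submodule.map_subtype_le _ _, ?_⟩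
  rw [Submodule.finrank_map_subtype_eq, finrank_span_finset_eq_card hli, hcard]

lemma card_filter_mem (X : Submodule K V) :
    (univ.filter (· ∈ X)).card = Fintype.card K ^ finrank K X := by
  rw [← Fintype.card_subtype]
  exact card_eq_pow_finrank

lemma card_mem_diff (A B : Submodule K V) :
    (univ.filter (fun w => w ∈ A ∧ w ∉ B)).card
      = Fintype.card K ^ finrank K ↥A - Fintype.card K ^ finrank K ↥(A ⊓ B) := by
  have hsub : univ.filter (· ∈ A ⊓ B) ⊆ univ.filter (· ∈ A) := by
    intro w hw; simp only [mem_filter, Submodule.mem_inf] at *; exact ⟨hw.1, hw.2.1⟩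
  have : univ.filter (fun w => w ∈ A ∧ w ∉ B)
      = univ.filter (· ∈ A) \ univ.filter (· ∈ (A ⊓ B)) := by
    ext w; simp [Submodule.mem_inf]; tauto
  rw [this, card_sdiff_of_subset hsub, card_filter_mem, card_filter_mem]

lemma finrank_fiber {H W U X : Submodule K V}
    (hHW : H ≤ W) (hdim : finrank K H + 1 = finrank K W) (hUH : U ≤ H)
    (h1 : X ≤ W) (h2 : ¬ X ≤ H) (h3 : X ⊓ H = U) :
    finrank K X = finrank K U + 1 := by
  have hsup : X ⊔ H = W := by
    by_contra hne
    have hle : X ⊔ H ≤ W := sup_le h1 hHW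
    have h6 : finrank K ↥(X ⊔ H) < finrank K W :=
      lt_of_le_of_ne (Submodule.finrank_mono hle)
        (fun hh => hne (Submodule.eq_of_le_of_finrank_le hle hh.ge))
    have h7 : finrank K ↥(X ⊔ H) ≤ finrank K H := by omega
    have heq := Submodule.eq_of_le_of_finrank_le (le_sup_right : H ≤ X ⊔ H) h7
    exact h2 ((le_sup_left : X ≤ X ⊔ H).trans heq.ge)
  have h8 := Submodule.finrank_sup_add_finrank_inf_eq X H
  rw [hsup, h3] at h8
  have hUW : finrank K U ≤ finrank K H := Submodule.finrank_mono hUH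
  omega

end Aux
section Aux2
variable {K V : Type*} [Field K] [Fintype K] [AddCommGroup V] [Module K V] [Fintype V]

lemma fiber_card {H W U : Submodule K V} (hHW : H ≤ W)
    (hdim : finrank K H + 1 = finrank K W) (hUH : U ≤ H) :
    (univ.filter (fun X : Submodule K V => X ≤ W ∧ ¬ X ≤ H ∧ X ⊓ H = U)).card
      = Fintype.card K ^ (finrank K H - finrank K U) := by
  set q := Fintype.card K with hq
  have hq2 : 2 ≤ q := Fintype.one_lt_card
  set k := finrank K U with hk
  have hkH : k ≤ finrank K H := Submodule.finrank_mono hUH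
  set T : Finset V := univ.filter (fun w => w ∈ W ∧ w ∉ H) with hT
  set φ : V → Submodule K V := fun w => U ⊔ Submodule.span K {w} with hφ
  set B : Finset (Submodule K V) :=
    univ.filter (fun X : Submodule K V => X ≤ W ∧ ¬ X ≤ H ∧ X ⊓ H = U) with hB
  have hmemφ : ∀ w : V, w ∈ φ w := fun w =>
    Submodule.mem_sup_right (Submodule.mem_span_singleton_self w)
  have hmaps : ∀ w ∈ T, φ w ∈ B := by
    intro w hw
    simp only [hT, mem_filter, mem_univ, true_and] at hw
    obtain ⟨hwW, hwH⟩ := hw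
    have hw0 : w ≠ 0 := fun h => hwH (h ▸ H.zero_mem)
    have hle : φ w ≤ W := sup_le (hUH.trans hHW)
      ((Submodule.span_singleton_le_iff_mem w W).mpr hwW)
    have hnle : ¬ φ w ≤ H := fun h => hwH (h (hmemφ w))
    have hUle : U ≤ φ w ⊓ H := le_inf le_sup_left hUH
    have hφr : finrank K ↥(φ w) ≤ k + 1 := by
      have h8 : finrank K ↥(φ w) + finrank K ↥(U ⊓ Submodule.span K {w})
          = finrank K ↥U + finrank K ↥(Submodule.span K {w}) :=
        Submodule.finrank_sup_add_finrank_inf_eq U _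
      rw [finrank_span_singleton hw0] at h8
      omega
    have hlt : φ w ⊓ H < φ w :=
      lt_of_le_of_ne inf_le_left (fun h => hnle (h ▸ inf_le_right))
    have : finrank K ↥(φ w ⊓ H) < finrank K ↥(φ w) := Submodule.finrank_lt_finrank_of_lt hlt
    have hinf : φ w ⊓ H = U :=
      (Submodule.eq_of_le_of_finrank_le hUle (by omega)).symm
    simp only [hB, mem_filter, mem_univ, true_and]
    exact ⟨hle, hnle, hinf⟩
  have hfibcard : ∀ X ∈ B, (T.filter (fun w => φ w = X)).card = q ^ (k+1) - q ^ k := by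
    intro X hX
    simp only [hB, mem_filter, mem_univ, true_and] at hX
    obtain ⟨hX1, hX2, hX3⟩ := hX
    have hXr : finrank K X = k + 1 := finrank_fiber hHW hdim hUH hX1 hX2 hX3
    have heq : T.filter (fun w => φ w = X) = univ.filter (fun w => w ∈ X ∧ w ∉ H) := by
      ext w
      simp only [hT, mem_filter, mem_univ, true_and, filter_filter]
      constructor
      · rintro ⟨⟨hwW, hwH⟩, hφw⟩
        exact ⟨hφw ▸ hmemφ w, hwH⟩
      · rintro ⟨hwX, hwH⟩
        refine ⟨⟨hX1 hwX, hwH⟩, ?_⟩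
        have hle : φ w ≤ X := sup_le (hX3 ▸ inf_le_left)
          ((Submodule.span_singleton_le_iff_mem w X).mpr hwX)
        have hUlt : U < φ w := lt_of_le_of_ne le_sup_left
          (fun h => (hUH (h ▸ hmemφ w) : w ∈ H) |> hwH)
        have := Submodule.finrank_lt_finrank_of_lt hUlt
        exact Submodule.eq_of_le_of_finrank_le hle (by omega)
    rw [heq, card_mem_diff, hX3, hXr]
  have hTcard : T.card = q ^ (finrank K H + 1) - q ^ (finrank K H) := by
    have := card_mem_diff W H
    rw [inf_eq_right.mpr hHW] at this
    rw [hT, this, hdim]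
  have hcount : T.card = B.card * (q ^ (k+1) - q ^ k) := by
    rw [card_eq_sum_card_fiberwise hmaps]
    rw [Finset.sum_congr rfl hfibcard, sum_const, smul_eq_mul]
  have hqpos : 0 < q := by omega
  have hpow : q ^ (k+1) - q ^ k ≠ 0 := by
    have : q ^ k < q ^ (k+1) := by
      apply Nat.pow_lt_pow_right (by omega) (by omega)
    omega
  have e1 : q ^ (finrank K H - k) * q ^ (k+1) = q ^ (finrank K H + 1) := by
    rw [← pow_add]; congr 1; omega
  have e2 : q ^ (finrank K H - k) * q ^ k = q ^ (finrank K H) := by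
    rw [← pow_add]; congr 1; omega
  have key : q ^ (finrank K H - k) * (q ^ (k+1) - q ^ k) = B.card * (q ^ (k+1) - q ^ k) := by
    rw [Nat.mul_sub, e1, e2, ← hTcard, hcount]
  exact (Nat.eq_of_mul_eq_mul_right (Nat.pos_of_ne_zero hpow) key).symm
end Aux2
section Aux3
variable {K V : Type*} [Field K] [Fintype K] [AddCommGroup V] [Module K V] [Fintype V]

lemma moebius_sum (n : ℕ) (W : Submodule K V) (hW : finrank K W = n) :
    (∑ X ∈ univ.filter (· ≤ W),
      ((-1 : ℝ) ^ (finrank K X) * (Fintype.card K : ℝ) ^ ((finrank K X).choose 2)))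
      = if W = ⊥ then 1 else 0 := by
  induction n using Nat.strong_induction_on generalizing W with
  | _ n IH =>
  match n, hW with
  | 0, hW =>
    have hWbot : W = ⊥ := by rwa [Submodule.finrank_eq_zero] at hW
    subst hWbot
    have hfil : univ.filter (· ≤ (⊥ : Submodule K V)) = {⊥} := by
      ext X; simp [le_bot_iff]
    rw [hfil, sum_singleton, if_pos rfl]
    simp [finrank_bot]
  | (m+1), hW =>
    have hWne : W ≠ ⊥ := by
      intro h; rw [h, finrank_bot] at hW; omega
    obtain ⟨H, hHW, hH⟩ := exists_sub_finrank m W (by omega)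
    have hdim : finrank K H + 1 = finrank K W := by omega
    set f : Submodule K V → ℝ :=
      fun X => (-1 : ℝ) ^ (finrank K X) * (Fintype.card K : ℝ) ^ ((finrank K X).choose 2)
      with hf
    have h1 : (univ.filter (· ≤ W)).filter (· ≤ H) = univ.filter (· ≤ H) := by
      rw [filter_filter]
      ext X; simp only [mem_filter, mem_univ, true_and]
      exact ⟨fun h => h.2, fun h => ⟨h.trans hHW, h⟩⟩
    have hS1 : ∑ X ∈ univ.filter (· ≤ H), f X = if H = ⊥ then 1 else 0 :=
      IH m (by omega) H hH
    set S₂ := (univ.filter (· ≤ W)).filter (fun X => ¬ X ≤ H) with hS₂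
    have hmaps2 : ∀ X ∈ S₂, X ⊓ H ∈ univ.filter (· ≤ H) := by
      intro X _; simp only [mem_filter, mem_univ, true_and]; exact inf_le_right
    have hsecond : ∑ X ∈ S₂, f X
        = -((Fintype.card K : ℝ) ^ m) * (if H = ⊥ then 1 else 0) := by
      rw [← Finset.sum_fiberwise_of_maps_to hmaps2 f]
      rw [← hS1, mul_sum]
      refine Finset.sum_congr rfl ?_
      intro U hU
      simp only [mem_filter, mem_univ, true_and] at hU
      have hfib : S₂.filter (fun X => X ⊓ H = U)
          = univ.filter (fun X : Submodule K V => X ≤ W ∧ ¬ X ≤ H ∧ X ⊓ H = U) := by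
        ext X
        simp only [hS₂, mem_filter, mem_univ, true_and, and_assoc]
      set k := finrank K U with hk
      have hkm : k ≤ m := hH ▸ Submodule.finrank_mono hU
      have hconst : ∀ X ∈ S₂.filter (fun X => X ⊓ H = U),
          f X = (-1 : ℝ) ^ (k+1) * (Fintype.card K : ℝ) ^ ((k+1).choose 2) := by
        intro X hX
        rw [hfib] at hX
        simp only [mem_filter, mem_univ, true_and] at hX
        have hfr := finrank_fiber hHW hdim hU hX.1 hX.2.1 hX.2.2
        simp only [hf, hfr]
        rfl
      rw [Finset.sum_congr rfl hconst, sum_const, hfib, fiber_card hHW hdim hU, hH, ← hk,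
        nsmul_eq_mul]
      push_cast
      have hch : (k+1).choose 2 = k.choose 2 + k := by
        have hcss := Nat.choose_succ_succ k 1
        rw [Nat.choose_one_right] at hcss
        norm_num at hcss
        omega
      have hmk : (Fintype.card K : ℝ) ^ (m-k) * (Fintype.card K : ℝ) ^ k
          = (Fintype.card K : ℝ) ^ m := by
        rw [← pow_add]; congr 1; omega
      calc (Fintype.card K : ℝ)^(m-k) * ((-1)^(k+1) * (Fintype.card K : ℝ)^((k+1).choose 2))
          = ((-1:ℝ)^(k+1)) * ((Fintype.card K : ℝ)^(m-k) * (Fintype.card K : ℝ)^k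
              * (Fintype.card K : ℝ)^(k.choose 2)) := by rw [hch, pow_add]; ring
        _ = ((-1:ℝ)^(k+1)) * ((Fintype.card K : ℝ)^m * (Fintype.card K : ℝ)^(k.choose 2)) := by
              rw [hmk]
        _ = -((Fintype.card K : ℝ)^m) * ((-1:ℝ)^k * (Fintype.card K : ℝ)^(k.choose 2)) := by
              rw [pow_succ]; ring
    have hsplit := Finset.sum_filter_add_sum_filter_not (univ.filter (· ≤ W)) (· ≤ H) f
    rw [h1] at hsplit
    rw [← hsplit, hS1, ← hS₂, hsecond, if_neg hWne]
    by_cases hHbot : H = ⊥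
    · have hm : m = 0 := by rw [hHbot, finrank_bot] at hH; omega
      rw [if_pos hHbot, hm]
      norm_num
    · rw [if_neg hHbot]; ring
end Aux3
section Aux4
variable {K V : Type*} [Field K] [Fintype K] [AddCommGroup V] [Module K V] [Fintype V]
variable [Fintype {W : Submodule K V // IsAtom W}]

noncomputable def tau (X : Submodule K V) : Finset {W : Submodule K V // IsAtom W} :=
  univ.filter (fun a => a.val ≤ X)

lemma mem_tau {X : Submodule K V} {a : {W : Submodule K V // IsAtom W}} :
    a ∈ tau X ↔ a.val ≤ X := by simp [tau]

lemma tau_subset_iff {X Y : Submodule K V} : tau X ⊆ tau Y ↔ X ≤ Y := by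
  constructor
  · intro h
    conv_lhs => rw [← sSup_atoms_le_eq X]
    apply sSup_le
    rintro a ⟨ha, haX⟩
    exact mem_tau.mp (h (mem_tau.mpr (show ((⟨a, ha⟩ : {W : Submodule K V // IsAtom W}) : Submodule K V) ≤ X from haX)))
  · intro h a ha
    exact mem_tau.mpr ((mem_tau.mp ha).trans h)

lemma tau_inj {X Y : Submodule K V} (h : tau X = tau Y) : X = Y :=
  le_antisymm (tau_subset_iff.mp (h ▸ Finset.Subset.refl _))
    (tau_subset_iff.mp (h ▸ Finset.Subset.refl _))

lemma tau_nonempty {X : Submodule K V} (hX : X ≠ ⊥) : (tau X).Nonempty := by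
  rcases Set.eq_empty_or_nonempty {a : Submodule K V | IsAtom a ∧ a ≤ X} with h | ⟨a, ha⟩
  · exfalso
    apply hX
    rw [← sSup_atoms_le_eq X, h, sSup_empty]
  · exact ⟨⟨a, ha.1⟩, mem_tau.mpr ha.2⟩

lemma mem_region_iff {σ : Finset {W : Submodule K V // IsAtom W}} {x : Submodule K V} :
    x ∈ region (fun a : {W : Submodule K V // IsAtom W} =>
      {y : Submodule K V | a.val ≤ y}) σ ↔ tau x = σ := by
  simp only [region, Set.mem_diff, Set.mem_iInter, Set.mem_setOf_eq, Set.mem_iUnion,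
    not_exists]
  constructor
  · rintro ⟨h1, h2⟩
    ext a
    simp only [mem_tau]
    refine ⟨fun h => by_contra fun hn => h2 a hn h, fun h => h1 a h⟩
  · intro h
    constructor
    · intro a ha
      exact mem_tau.mp (h ▸ ha : a ∈ tau x)
    · intro a ha hax
      exact ha (h ▸ mem_tau.mpr hax)

lemma venn_eq {σ : Finset {W : Submodule K V // IsAtom W}} :
    σ ∈ venn (fun a : {W : Submodule K V // IsAtom W} =>
      {y : Submodule K V | a.val ≤ y}) ↔ ∃ X : Submodule K V, X ≠ ⊥ ∧ tau X = σ := by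
  constructor
  · rintro ⟨hne, x, hx⟩
    refine ⟨x, ?_, mem_region_iff.mp hx⟩
    rintro rfl
    obtain ⟨a, ha⟩ := hne
    have : a ∈ tau (⊥ : Submodule K V) := (mem_region_iff.mp hx) ▸ ha
    exact a.2.1 (le_bot_iff.mp (mem_tau.mp this))
  · rintro ⟨X, hX, rfl⟩
    exact ⟨tau_nonempty hX, X, mem_region_iff.mpr rfl⟩

lemma nerve_eq {σ : Finset {W : Submodule K V // IsAtom W}} :
    σ ∈ nerve (fun a : {W : Submodule K V // IsAtom W} =>
      {y : Submodule K V | a.val ≤ y}) ↔ σ.Nonempty := by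
  constructor
  · exact fun h => h.1
  · intro h
    refine ⟨h, ⊤, ?_⟩
    simp [Set.mem_iInter]

lemma sum_venn (g : Finset {W : Submodule K V // IsAtom W} → ℝ) (W : Submodule K V) :
    ∑ X ∈ univ.filter (fun X : Submodule K V => X ≤ W ∧ X ≠ ⊥), g (tau X)
      = ∑ σ ∈ (tau W).powerset.filter (· ∈ venn (fun a : {W : Submodule K V // IsAtom W} =>
          {y : Submodule K V | a.val ≤ y})), g σ := by
  refine Finset.sum_bij (fun X _ => tau X) ?_ ?_ ?_ ?_
  · intro X hX
    simp only [mem_filter, mem_univ, true_and] at hX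
    simp only [mem_filter, mem_powerset]
    exact ⟨tau_subset_iff.mpr hX.1, venn_eq.mpr ⟨X, hX.2, rfl⟩⟩
  · intro X hX Y hY h
    exact tau_inj h
  · intro σ hσ
    simp only [mem_filter, mem_powerset] at hσ
    obtain ⟨X, hX, rfl⟩ := venn_eq.mp hσ.2
    refine ⟨X, ?_, rfl⟩
    simp only [mem_filter, mem_univ, true_and]
    exact ⟨tau_subset_iff.mp hσ.1, hX⟩
  · intro X hX; rfl
end Aux4
section Aux5
variable {K V : Type*} [Field K] [Fintype K] [AddCommGroup V] [Module K V] [Fintype V]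

lemma unique_ie (β γ : Submodule K V → ℝ)
    (hβ : ∀ W : Submodule K V, W ≠ ⊥ →
      ∑ X ∈ univ.filter (fun X : Submodule K V => X ≤ W ∧ X ≠ ⊥), β X = 1)
    (hγ : ∀ W : Submodule K V, W ≠ ⊥ →
      ∑ X ∈ univ.filter (fun X : Submodule K V => X ≤ W ∧ X ≠ ⊥), γ X = 1) :
    ∀ (n : ℕ) (W : Submodule K V), finrank K W = n → W ≠ ⊥ → β W = γ W := by
  intro n
  induction n using Nat.strong_induction_on with
  | _ n IH =>
  intro W hWn hW
  have h1 := hβ W hW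
  have h2 := hγ W hW
  set s := univ.filter (fun X : Submodule K V => X ≤ W ∧ X ≠ ⊥) with hs
  have hWs : W ∈ s := by simp [hs, hW]
  have e1 : ∑ X ∈ s.erase W, β X + β W = ∑ X ∈ s, β X := Finset.sum_erase_add s β hWs
  have e2 : ∑ X ∈ s.erase W, γ X + γ W = ∑ X ∈ s, γ X := Finset.sum_erase_add s γ hWs
  have e3 : ∑ X ∈ s.erase W, β X = ∑ X ∈ s.erase W, γ X := by
    refine Finset.sum_congr rfl ?_
    intro X hX
    rw [Finset.mem_erase, hs, mem_filter] at hX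
    obtain ⟨hne, -, hle, hbot⟩ := hX
    exact IH (finrank K X) (hWn ▸ Submodule.finrank_lt_finrank_of_lt (lt_of_le_of_ne hle hne))
      X rfl hbot
  linarith

end Aux5

/-- The lattice of all `F_q`-linear subspaces of `F_q^{d+1}` is finite, so its set of atoms
(the one-dimensional subspaces) is a finite type. -/
noncomputable instance atomsFintype (K : Type) [Field K] [Fintype K] (d : ℕ) :
    Fintype {W : Submodule K (Fin (d + 1) → K) // IsAtom W} :=
  have : Finite (Submodule K (Fin (d + 1) → K)) :=
    Finite.of_injective _ SetLike.coe_injective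
  Fintype.ofFinite _

/-- for the lattice `L` of subspaces of `F_q^{d+1}` (the finite field `F_q`
being modelled by a finite field `K` with `q = |K|` elements) and the family
`F_a = {x ∈ L : a ≤ x}` indexed by the atoms of `L`, the unique IE-vector `α` supported on
the Venn diagram has `ℓ₁`-norm `Σ_{k=0}^d q^{k(k+1)/2}·N_k`, where `N_k` is the number of
subspaces of dimension `k+1`; in particular `‖α‖₁ ≥ q^{d(d+1)/2}`. -/
theorem stmt19 (K : Type) [Field K] [Fintype K] (d : ℕ) (hd : 1 ≤ d)
    (F : {W : Submodule K (Fin (d + 1) → K) // IsAtom W} →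
      Set (Submodule K (Fin (d + 1) → K)))
    (hF : ∀ a, F a = {x | a.val ≤ x})
    (α : Finset {W : Submodule K (Fin (d + 1) → K) // IsAtom W} → ℝ)
    (hα : IsIEVector F α) (hsupp : ∀ σ, σ ∉ venn F → α σ = 0) :
    (∑ σ ∈ Finset.univ.filter (· ∈ nerve F), |α σ|) =
      (∑ k ∈ Finset.range (d + 1), (Fintype.card K : ℝ) ^ (k * (k + 1) / 2) *
        (Nat.card {W : Submodule K (Fin (d + 1) → K) //
          Module.finrank K W = k + 1} : ℝ)) ∧
    (Fintype.card K : ℝ) ^ (d * (d + 1) / 2) ≤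
      ∑ σ ∈ Finset.univ.filter (· ∈ nerve F), |α σ| := by
  have hFc : F = fun a => {x | a.val ≤ x} := funext hF
  subst hFc
  set V := Fin (d + 1) → K with hV
  have hfrV : finrank K V = d + 1 := Module.finrank_fin_fun K
  set β : Submodule K V → ℝ := fun X => α (tau X) with hβ
  set g : Submodule K V → ℝ :=
    fun X => -((-1 : ℝ) ^ (finrank K X) * (Fintype.card K : ℝ) ^ ((finrank K X).choose 2))
    with hg
  -- the split of the full ≤-filter
  have hins : ∀ W : Submodule K V, univ.filter (· ≤ W)
      = insert ⊥ (univ.filter (fun X : Submodule K V => X ≤ W ∧ X ≠ ⊥)) := by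
    intro W
    ext X
    simp only [mem_filter, mem_univ, true_and, mem_insert]
    by_cases hX : X = ⊥
    · subst hX; simp
    · simp [hX]
  have hbotnot : ∀ W : Submodule K V,
      (⊥ : Submodule K V) ∉ univ.filter (fun X : Submodule K V => X ≤ W ∧ X ≠ ⊥) := by
    intro W; simp
  -- Step B : g sums to 1
  have hgsum : ∀ W : Submodule K V, W ≠ ⊥ →
      ∑ X ∈ univ.filter (fun X : Submodule K V => X ≤ W ∧ X ≠ ⊥), g X = 1 := by
    intro W hW
    have hm := moebius_sum (finrank K W) W rfl
    rw [if_neg hW, hins W, Finset.sum_insert (hbotnot W)] at hm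
    simp only [finrank_bot, pow_zero, Nat.choose, one_mul] at hm
    have : ∑ X ∈ univ.filter (fun X : Submodule K V => X ≤ W ∧ X ≠ ⊥),
        ((-1 : ℝ) ^ (finrank K X) * (Fintype.card K : ℝ) ^ ((finrank K X).choose 2)) = -1 := by
      linarith
    rw [hg]
    rw [Finset.sum_neg_distrib]
    rw [this]
    norm_num
  -- Step A : β sums to 1
  have hβsum : ∀ W : Submodule K V, W ≠ ⊥ →
      ∑ X ∈ univ.filter (fun X : Submodule K V => X ≤ W ∧ X ≠ ⊥), β X = 1 := by
    intro W hW
    have h2 := hα.2 (tau W) (venn_eq.mpr ⟨W, hW, rfl⟩)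
    have hsub : (tau W).powerset.filter
          (· ∈ venn (fun a : {W : Submodule K V // IsAtom W} => {y : Submodule K V | a.val ≤ y}))
        ⊆ (tau W).powerset.filter
          (· ∈ nerve (fun a : {W : Submodule K V // IsAtom W} => {y : Submodule K V | a.val ≤ y})) := by
      intro σ hσ
      simp only [mem_filter] at *
      exact ⟨hσ.1, nerve_eq.mpr hσ.2.1⟩
    have hz : ∀ σ ∈ (tau W).powerset.filter
          (· ∈ nerve (fun a : {W : Submodule K V // IsAtom W} => {y : Submodule K V | a.val ≤ y})),
        σ ∉ (tau W).powerset.filter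
          (· ∈ venn (fun a : {W : Submodule K V // IsAtom W} => {y : Submodule K V | a.val ≤ y}))
        → α σ = 0 := by
      intro σ h1 h2
      apply hsupp
      simp only [mem_filter] at h1 h2
      exact fun hv => h2 ⟨h1.1, hv⟩
    rw [← Finset.sum_subset hsub hz] at h2
    rw [sum_venn α W]
    exact h2
  -- Step C : β = g on nonbot
  have hβg : ∀ X : Submodule K V, X ≠ ⊥ → β X = g X :=
    fun X hX => unique_ie β g hβsum hgsum (finrank K X) X rfl hX
  -- Step D/E : rewrite the LHS as a sum over nonzero subspaces
  have hD : (∑ σ ∈ Finset.univ.filter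
        (· ∈ nerve (fun a : {W : Submodule K V // IsAtom W} => {y : Submodule K V | a.val ≤ y})),
        |α σ|)
      = ∑ X ∈ univ.filter (fun X : Submodule K V => X ≤ (⊤ : Submodule K V) ∧ X ≠ ⊥), |β X| := by
    have h1 : univ.filter (· ∈ venn (fun a : {W : Submodule K V // IsAtom W} =>
          {y : Submodule K V | a.val ≤ y}))
        ⊆ univ.filter (· ∈ nerve (fun a : {W : Submodule K V // IsAtom W} =>
          {y : Submodule K V | a.val ≤ y})) := by
      intro σ h
      simp only [mem_filter, mem_univ, true_and] at *
      exact nerve_eq.mpr h.1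
    have h0 : ∀ σ ∈ univ.filter (· ∈ nerve (fun a : {W : Submodule K V // IsAtom W} =>
          {y : Submodule K V | a.val ≤ y})),
        σ ∉ univ.filter (· ∈ venn (fun a : {W : Submodule K V // IsAtom W} =>
          {y : Submodule K V | a.val ≤ y})) → |α σ| = 0 := by
      intro σ _ h2
      simp only [mem_filter, mem_univ, true_and] at h2
      rw [hsupp σ h2, abs_zero]
    rw [← Finset.sum_subset h1 h0]
    have htop : tau (⊤ : Submodule K V) = univ := by
      ext a; simp [mem_tau]
    have hswap : univ.filter (· ∈ venn (fun a : {W : Submodule K V // IsAtom W} =>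
          {y : Submodule K V | a.val ≤ y}))
        = (tau (⊤ : Submodule K V)).powerset.filter
          (· ∈ venn (fun a : {W : Submodule K V // IsAtom W} =>
            {y : Submodule K V | a.val ≤ y})) := by
      rw [htop, powerset_univ]
    rw [hswap, ← sum_venn (fun σ => |α σ|) ⊤]
  have habs : ∀ X ∈ univ.filter (fun X : Submodule K V => X ≤ (⊤ : Submodule K V) ∧ X ≠ ⊥),
      |β X| = (Fintype.card K : ℝ) ^ ((finrank K X).choose 2) := by
    intro X hX
    simp only [mem_filter, mem_univ, true_and] at hX
    rw [hβg X hX.2, hg]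
    rw [abs_neg, abs_mul, abs_pow, abs_neg, abs_one, one_pow, one_mul]
    exact abs_of_nonneg (by positivity)
  -- Step G : regroup by dimension
  have hEQ : (∑ σ ∈ Finset.univ.filter
        (· ∈ nerve (fun a : {W : Submodule K V // IsAtom W} => {y : Submodule K V | a.val ≤ y})),
        |α σ|)
      = ∑ k ∈ Finset.range (d + 1), (Fintype.card K : ℝ) ^ (k * (k + 1) / 2) *
          (Nat.card {W : Submodule K V // finrank K ↥W = k + 1} : ℝ) := by
    rw [hD, Finset.sum_congr rfl habs]
    have hmapsk : ∀ X ∈ univ.filter (fun X : Submodule K V => X ≤ (⊤ : Submodule K V) ∧ X ≠ ⊥),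
        finrank K X - 1 ∈ Finset.range (d+1) := by
      intro X hX
      have := Submodule.finrank_le X
      rw [hfrV] at this
      simp only [mem_range]
      omega
    rw [← Finset.sum_fiberwise_of_maps_to hmapsk
      (fun X => (Fintype.card K : ℝ) ^ ((finrank K X).choose 2))]
    refine Finset.sum_congr rfl ?_
    intro k hk
    have hfibk : (univ.filter (fun X : Submodule K V => X ≤ (⊤ : Submodule K V) ∧ X ≠ ⊥)).filter
          (fun X : Submodule K V => finrank K ↥X - 1 = k)
        = univ.filter (fun X : Submodule K V => finrank K ↥X = k + 1) := by
      ext X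
      simp only [mem_filter, mem_univ, true_and, le_top, true_and]
      constructor
      · intro hyp
        have hbot : X ≠ ⊥ := fun hXb => by simp [hXb] at hyp
        have h0 : finrank K ↥X ≠ 0 := fun h0 => hbot (Submodule.finrank_eq_zero.mp h0)
        omega
      · intro h
        have hb : X ≠ ⊥ := by
          intro hXb
          rw [hXb, finrank_bot] at h
          omega
        refine ⟨?_, by omega⟩
        simpa using hb
    have hconstk : ∀ X ∈ (univ.filter (fun X : Submodule K V => X ≤ (⊤ : Submodule K V) ∧ X ≠ ⊥)).filter
          (fun X : Submodule K V => finrank K ↥X - 1 = k),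
        (Fintype.card K : ℝ) ^ ((finrank K X).choose 2)
          = (Fintype.card K : ℝ) ^ ((k+1).choose 2) := by
      intro X hX
      rw [hfibk] at hX
      simp only [mem_filter, mem_univ, true_and] at hX
      rw [hX]
    rw [Finset.sum_congr rfl hconstk, sum_const, hfibk, nsmul_eq_mul]
    have hcard : (univ.filter (fun X : Submodule K V => finrank K ↥X = k + 1)).card
        = Nat.card {W : Submodule K V // finrank K ↥W = k + 1} := by
      rw [Nat.card_eq_fintype_card, Fintype.card_subtype]
    have hch2 : (k+1).choose 2 = k * (k + 1) / 2 := by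
      rw [Nat.choose_two_right]
      simp [Nat.mul_comm]
    rw [hcard, hch2, mul_comm]
  refine ⟨hEQ, ?_⟩
  rw [hEQ]
  have hNd : 1 ≤ (Nat.card {W : Submodule K V // finrank K ↥W = d + 1} : ℝ) := by
    have h1 : Nonempty {W : Submodule K V // finrank K ↥W = d + 1} :=
      ⟨⟨⊤, by rw [finrank_top, hfrV]⟩⟩
    have h2 : Finite {W : Submodule K V // finrank K ↥W = d + 1} := by
      have : Finite (Submodule K V) := Finite.of_injective _ SetLike.coe_injective
      exact Subtype.finite
    have := Nat.card_pos (α := {W : Submodule K V // finrank K ↥W = d + 1})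
    exact_mod_cast this
  calc (Fintype.card K : ℝ) ^ (d * (d + 1) / 2)
      ≤ (Fintype.card K : ℝ) ^ (d * (d + 1) / 2) *
          (Nat.card {W : Submodule K V // finrank K ↥W = d + 1} : ℝ) := by
        exact le_mul_of_one_le_right (by positivity) hNd
    _ ≤ ∑ k ∈ Finset.range (d + 1), (Fintype.card K : ℝ) ^ (k * (k + 1) / 2) *
          (Nat.card {W : Submodule K V // finrank K ↥W = k + 1} : ℝ) := by
        refine Finset.single_le_sum
          (f := fun k => (Fintype.card K : ℝ) ^ (k * (k + 1) / 2) *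
            (Nat.card {W : Submodule K V // finrank K ↥W = k + 1} : ℝ))
          (fun i _ => by positivity) ?_
        simp
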